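/- arXiv:1608.08663 — 2 statements merged into one kernel-verified Lean document; each statement's English description precedes it below -/
import Mathlib

section
/- Let f(z) = Σ_{j=1}^d b_j z^{α(j)} be a Laurent polynomial in n complex variables with nonzero coefficients b_j and exponents α(j) ∈ ℤ^n, and let F(w,x) = Σ_{j=1}^d w_j x_j in 2d complex variables. Then for every w ∈ ℝ^n: f is not lopsided at w if and only if the point (log|b_1|, …, log|b_d|, ⟨α(1), w⟩, …, ⟨α(d), w⟩) ∈ ℝ^d × ℝ^d belongs to the amoeba A(F). Consequently, the lopsided amoeba L(f) is the image, under the affine isomorphism inverse to w ↦ (log|b|, ⟨α(1),w⟩,…,⟨α(d),w⟩), of the intersection of A(F) with the affine slice {u = log|b|} and with ℝ^d times the linear amoeba {(⟨α(1),w⟩,…,⟨α(d),w⟩) : w ∈ ℝ^n} of the toric variety X_A. -/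
open Finset

/-- Evaluation of the Laurent polynomial `f(z) = ∑ j, b j * z ^ α j` with
coefficients `b` and integer exponent vectors `α`. -/
noncomputable def lauEval {n d : ℕ} (b : Fin d → ℂ) (α : Fin d → Fin n → ℤ)
    (z : Fin n → ℂ) : ℂ :=
  ∑ j, b j * ∏ i, z i ^ α j i

/-- The amoeba of the Laurent polynomial given by `b, α`: the image of its zero
set in the torus under the coordinatewise log-absolute-value map. -/
def amoeba {n d : ℕ} (b : Fin d → ℂ) (α : Fin d → Fin n → ℤ) :
    Set (Fin n → ℝ) :=
  {w | ∃ z : Fin n → ℂ, (∀ i, z i ≠ 0) ∧ lauEval b α z = 0 ∧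
    ∀ i, w i = Real.log (‖z i‖)}

/-- Lopsidedness of the Laurent polynomial given by `b, α` at the point
`w ∈ ℝⁿ` (i.e. at `Log|v|` where `|v i| = exp (w i)`). -/
def IsLopsidedAt {n d : ℕ} (b : Fin d → ℂ) (α : Fin d → Fin n → ℤ)
    (w : Fin n → ℝ) : Prop :=
  ∃ k : Fin d,
    (∑ j ∈ Finset.univ.erase k, ‖b j‖ * ∏ i, Real.exp (w i) ^ α j i) <
      ‖b k‖ * ∏ i, Real.exp (w i) ^ α k i

/-- The lopsided amoeba: the set of points where the polynomial is not lopsided. -/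
def lopAmoeba {n d : ℕ} (b : Fin d → ℂ) (α : Fin d → Fin n → ℤ) :
    Set (Fin n → ℝ) :=
  {w | ¬ IsLopsidedAt b α w}

/-- The cyclic resultant `cres(f; r)` of the Laurent polynomial given by `b, α`,
evaluated at `z`; it is the product of `f(ω₁ z₁, …, ωₙ zₙ)` over all `n`-tuples
`ω` of `r`-th roots of unity. -/
noncomputable def cresEval {n d : ℕ} (b : Fin d → ℂ) (α : Fin d → Fin n → ℤ)
    (r : ℕ) (z : Fin n → ℂ) : ℂ :=
  ∏ t : Fin n → Fin r,
    lauEval b α (fun i => Complex.exp (2 * Real.pi * Complex.I * (t i : ℕ) / r) * z i)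

/-- The amoeba of the bilinear form `F(w,x) = ∑ wⱼ xⱼ`, as a subset of
`ℝ^d × ℝ^d`. -/
def bilinearAmoeba (d : ℕ) : Set ((Fin d → ℝ) × (Fin d → ℝ)) :=
  {p | ∃ w x : Fin d → ℂ, (∀ j, w j ≠ 0) ∧ (∀ j, x j ≠ 0) ∧
    (∑ j, w j * x j) = 0 ∧
    (∀ j, p.1 j = Real.log (‖w j‖)) ∧
    (∀ j, p.2 j = Real.log (‖x j‖))}

/-- The affine embedding `w ↦ (Log|b|, (⟨α(1),w⟩, …, ⟨α(d),w⟩))` of `ℝⁿ` into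
`ℝ^d × ℝ^d`. -/
noncomputable def toricEmbed {n d : ℕ} (b : Fin d → ℂ) (α : Fin d → Fin n → ℤ)
    (w : Fin n → ℝ) : (Fin d → ℝ) × (Fin d → ℝ) :=
  ((fun j => Real.log (‖b j‖)), fun j => ∑ i, (α j i : ℝ) * w i)

lemma exp_zpow (x : ℝ) (m : ℤ) : Real.exp x ^ m = Real.exp (m * x) := by
  rw [← Real.rpow_intCast, Real.rpow_def_of_pos (Real.exp_pos x), Real.log_exp, mul_comm]

lemma prod_exp {n : ℕ} (α : Fin n → ℤ) (w : Fin n → ℝ) :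
    ∏ i, Real.exp (w i) ^ α i = Real.exp (∑ i, (α i : ℝ) * w i) := by
  rw [Real.exp_sum]
  exact Finset.prod_congr rfl fun i _ => by rw [exp_zpow]

lemma triangle_exists (p q r : ℝ) (hp : 0 < p) (hq : 0 ≤ q) (hr : 0 ≤ r)
    (h1 : p ≤ q + r) (h2 : q ≤ p + r) (h3 : r ≤ p + q) :
    ∃ v w : ℂ, ‖v‖ = q ∧ ‖w‖ = r ∧ (p : ℂ) + v + w = 0 := by
  rcases eq_or_lt_of_le hq with hq0 | hq0
  · refine ⟨0, -(p : ℂ), by simp [← hq0], ?_, by ring⟩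
    have : r = p := le_antisymm (by linarith) (by linarith)
    simp [this, abs_of_pos hp]
  · set c : ℝ := (r ^ 2 - p ^ 2 - q ^ 2) / (2 * p * q) with hc
    have hpq : 0 < 2 * p * q := by positivity
    have hc1 : c ≤ 1 := by
      rw [div_le_one hpq]; nlinarith
    have hcm : -1 ≤ c := by
      rw [le_div_iff₀ hpq]; nlinarith
    set s : ℝ := Real.sqrt (1 - c ^ 2) with hs
    have hs2 : s ^ 2 = 1 - c ^ 2 := Real.sq_sqrt (by nlinarith)
    refine ⟨⟨q * c, q * s⟩, -(p : ℂ) - ⟨q * c, q * s⟩, ?_, ?_, by ring⟩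
    · rw [Complex.norm_def, Complex.normSq_mk]
      rw [show q * c * (q * c) + q * s * (q * s) = q ^ 2 * (c ^ 2 + s ^ 2) by ring, hs2]
      rw [show c ^ 2 + (1 - c ^ 2) = 1 by ring, mul_one, Real.sqrt_sq hq]
    · have : (-(p : ℂ) - ⟨q * c, q * s⟩) = ⟨-p - q * c, -(q * s)⟩ := by
        apply Complex.ext <;> simp
      rw [this, Complex.norm_def, Complex.normSq_mk]
      have : (-p - q * c) * (-p - q * c) + -(q * s) * -(q * s) = r ^ 2 := by
        have : c * (2 * p * q) = r ^ 2 - p ^ 2 - q ^ 2 := by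
          rw [hc]; field_simp
        nlinarith [hs2]
      rw [this, Real.sqrt_sq hr]


lemma polygon_exists {d : ℕ} (a : Fin d → ℝ) (ha : ∀ j, 0 < a j)
    (h : ∀ k, a k ≤ ∑ j ∈ univ.erase k, a j) :
    ∃ y : Fin d → ℂ, (∀ j, ‖y j‖ = a j) ∧ ∑ j, y j = 0 := by
  rcases isEmpty_or_nonempty (Fin d) with hd | hd
  · exact ⟨fun j => 0, fun j => hd.elim j, by simp⟩
  · obtain ⟨k, -, hk⟩ := Finset.exists_max_image Finset.univ a univ_nonempty
    set E := Finset.univ.erase k with hE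
    set S := ∑ j ∈ E, a j with hS
    have hak : a k ≤ S := h k
    have hSnn : 0 ≤ S := Finset.sum_nonneg fun j _ => (ha j).le
    set P := E.powerset.filter (fun T => ∑ j ∈ T, a j ≤ (S + a k) / 2) with hP
    have hPne : P.Nonempty := ⟨∅, by
      simp only [hP, Finset.mem_filter, Finset.mem_powerset]
      exact ⟨Finset.empty_subset _, by rw [Finset.sum_empty]; linarith [ha k]⟩⟩
    obtain ⟨T, hTP, hTmax⟩ := Finset.exists_max_image P (fun T => ∑ j ∈ T, a j) hPne
    rw [hP, Finset.mem_filter, Finset.mem_powerset] at hTP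
    obtain ⟨hTE, hThi⟩ := hTP
    set q := ∑ j ∈ T, a j with hq
    have hqnn : 0 ≤ q := Finset.sum_nonneg fun j _ => (ha j).le
    have hqS : q ≤ S := Finset.sum_le_sum_of_subset_of_nonneg hTE fun j _ _ => (ha j).le
    have hlow : (S - a k) / 2 ≤ q := by
      by_contra hlt
      push_neg at hlt
      have hTne : T ≠ E := fun hh => by rw [hh] at hq; linarith
      obtain ⟨j0, hj0E, hj0T⟩ := Finset.exists_of_ssubset (hTE.ssubset_of_ne hTne)
      have : insert j0 T ∈ P := by
        rw [hP, Finset.mem_filter, Finset.mem_powerset]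
        refine ⟨Finset.insert_subset hj0E hTE, ?_⟩
        rw [Finset.sum_insert hj0T]
        have := hk j0 (Finset.mem_univ j0)
        linarith
      have := hTmax _ this
      rw [Finset.sum_insert hj0T] at this
      linarith [ha j0]
    set r := S - q with hr
    obtain ⟨v, w, hv, hw, hvw⟩ := triangle_exists (a k) q r (ha k) hqnn (by linarith)
      (by linarith) (by linarith) (by linarith)
    set G := E \ T with hG
    have hGsum : ∑ j ∈ G, a j = r := by
      have := Finset.sum_sdiff (f := a) hTE
      rw [hr, hS]; linarith
    refine ⟨fun j => if j = k then (a k : ℂ) else if j ∈ T then (a j : ℝ) * (v / q)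
      else (a j : ℝ) * (w / r), fun j => ?_, ?_⟩
    · by_cases hjk : j = k
      · simp [hjk, abs_of_pos (ha k)]
      · by_cases hjT : j ∈ T
        · have hq0 : 0 < q := hq ▸ Finset.sum_pos (fun i _ => ha i) ⟨j, hjT⟩
          simp only [hjk, if_false, hjT, if_true, norm_mul, norm_div, Complex.norm_real, Real.norm_eq_abs, hv]
          rw [abs_of_pos (ha j), abs_of_pos hq0, div_self hq0.ne', mul_one]
        · have hjG : j ∈ G := by
            rw [hG, Finset.mem_sdiff]
            exact ⟨Finset.mem_erase.2 ⟨hjk, Finset.mem_univ j⟩, hjT⟩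
          have hr0 : 0 < r := hGsum ▸ Finset.sum_pos (fun i _ => ha i) ⟨j, hjG⟩
          simp only [hjk, if_false, hjT, if_false, norm_mul, norm_div, Complex.norm_real, Real.norm_eq_abs, hw]
          rw [abs_of_pos (ha j), abs_of_pos hr0, div_self hr0.ne', mul_one]
    · rw [← Finset.add_sum_erase _ _ (Finset.mem_univ k), if_pos rfl]
      have hsplit : ∑ j ∈ Finset.univ.erase k,
          (if j = k then (a k : ℂ) else if j ∈ T then (a j : ℝ) * (v / q)
            else (a j : ℝ) * (w / r))
          = ∑ j ∈ T, ((a j : ℝ) : ℂ) * (v / q) + ∑ j ∈ G, ((a j : ℝ) : ℂ) * (w / r) := by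
        rw [← hE, ← Finset.sum_sdiff (f := fun j => if j = k then (a k : ℂ)
          else if j ∈ T then (a j : ℝ) * (v / q) else (a j : ℝ) * (w / r)) hTE, ← hG, add_comm]
        congr 1
        · refine Finset.sum_congr rfl fun j hj => ?_
          have hjk : j ≠ k := (Finset.mem_erase.1 (hTE hj)).1
          rw [if_neg hjk, if_pos hj]
        · refine Finset.sum_congr rfl fun j hj => ?_
          rw [hG, Finset.mem_sdiff] at hj
          have hjk : j ≠ k := (Finset.mem_erase.1 hj.1).1
          rw [if_neg hjk, if_neg hj.2]
      rw [hsplit]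
      have hTv : ∑ j ∈ T, ((a j : ℝ) : ℂ) * (v / q) = v := by
        rw [← Finset.sum_mul, ← Complex.ofReal_sum, ← hq]
        rcases eq_or_lt_of_le hqnn with h0 | h0
        · have hv0 : v = 0 := norm_eq_zero.mp (by rw [hv, ← h0])
          rw [hv0, ← h0]; simp
        · have : (q : ℂ) ≠ 0 := by exact_mod_cast h0.ne'
          field_simp
      have hGw : ∑ j ∈ G, ((a j : ℝ) : ℂ) * (w / r) = w := by
        rw [← Finset.sum_mul, ← Complex.ofReal_sum, hGsum]
        rcases eq_or_lt_of_le (by linarith : (0:ℝ) ≤ r) with h0 | h0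
        · have hw0 : w = 0 := norm_eq_zero.mp (by rw [hw, ← h0])
          rw [hw0, ← h0]; simp
        · have : (r : ℂ) ≠ 0 := by exact_mod_cast h0.ne'
          field_simp
      rw [hTv, hGw]
      linear_combination hvw

/-- `f` is not lopsided at `w` iff `(Log|b|, (⟨α(j),w⟩)ⱼ)` lies in the amoeba
of `F(w,x) = ∑ wⱼ xⱼ`; consequently the lopsided amoeba `L(f)` is identified,
via this affine embedding, with the intersection of `A(F)` with the slice
`H_b = {Log|w| = Log|b|}` and with `ℝ^d × A(X_A)`, where `A(X_A)` is the linear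
amoeba of the toric variety `X_A`. -/
theorem lopsided_amoeba_is_intersection
    (n d : ℕ) (b : Fin d → ℂ) (hb : ∀ j, b j ≠ 0) (α : Fin d → Fin n → ℤ) :
    (∀ w : Fin n → ℝ,
      (¬ IsLopsidedAt b α w ↔ toricEmbed b α w ∈ bilinearAmoeba d))
    ∧ toricEmbed b α '' lopAmoeba b α =
        bilinearAmoeba d ∩
        {p : (Fin d → ℝ) × (Fin d → ℝ) |
          p.1 = fun j => Real.log (‖b j‖)} ∩
        (Set.univ ×ˢ
          {y : Fin d → ℝ | ∃ w : Fin n → ℝ, ∀ j, y j = ∑ i, (α j i : ℝ) * w i}) := by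
  have key : ∀ w : Fin n → ℝ,
      (¬ IsLopsidedAt b α w ↔ toricEmbed b α w ∈ bilinearAmoeba d) := by
    intro w
    constructor
    · intro hnl
      have hle : ∀ k, ‖b k‖ * Real.exp (∑ i, (α k i : ℝ) * w i) ≤
          ∑ j ∈ univ.erase k, ‖b j‖ * Real.exp (∑ i, (α j i : ℝ) * w i) := by
        intro k
        by_contra hlt
        push_neg at hlt
        exact hnl ⟨k, by simpa only [prod_exp] using hlt⟩
      obtain ⟨y, hy, hsum⟩ := polygon_exists
        (fun j => ‖b j‖ * Real.exp (∑ i, (α j i : ℝ) * w i))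
        (fun j => mul_pos (norm_pos_iff.mpr (hb j)) (Real.exp_pos _)) hle
      have hyne : ∀ j, y j ≠ 0 := fun j h0 => by
        have := hy j
        rw [h0, norm_zero] at this
        exact absurd this.symm
          (ne_of_gt (mul_pos (norm_pos_iff.mpr (hb j)) (Real.exp_pos _)))
      refine ⟨b, fun j => y j / b j, hb, fun j => div_ne_zero (hyne j) (hb j), ?_,
        fun j => rfl, fun j => ?_⟩
      · rw [← hsum]
        exact Finset.sum_congr rfl fun j _ => by
          rw [mul_comm, div_mul_cancel₀ _ (hb j)]
      · show (∑ i, (α j i : ℝ) * w i) = _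
        rw [norm_div, hy j, mul_comm, mul_div_assoc,
          div_self (norm_ne_zero_iff.mpr (hb j)), mul_one, Real.log_exp]
    · rintro ⟨W, X, hW, hX, hsum, h1, h2⟩ ⟨k, hk⟩
      have habsW : ∀ j, ‖W j‖ = ‖b j‖ := fun j => by
        have h := h1 j
        calc ‖W j‖ = Real.exp (Real.log (‖W j‖)) :=
              (Real.exp_log (norm_pos_iff.mpr (hW j))).symm
          _ = Real.exp (Real.log (‖b j‖)) := by rw [← h]; rfl
          _ = ‖b j‖ := Real.exp_log (norm_pos_iff.mpr (hb j))
      have habsX : ∀ j, ‖X j‖ = Real.exp (∑ i, (α j i : ℝ) * w i) := fun j => by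
        have h := h2 j
        rw [show ((toricEmbed b α w).2 j) = ∑ i, (α j i : ℝ) * w i from rfl] at h
        rw [h, Real.exp_log (norm_pos_iff.mpr (hX j))]
      have hWX : W k * X k = -∑ j ∈ univ.erase k, W j * X j := by
        have h := Finset.add_sum_erase univ (fun j => W j * X j) (Finset.mem_univ k)
        rw [hsum] at h
        exact eq_neg_of_add_eq_zero_left h
      have hineq : ‖W k * X k‖ ≤
          ∑ j ∈ univ.erase k, ‖W j * X j‖ := by
        rw [hWX, norm_neg]
        exact norm_sum_le _ _
      have heq : ∀ j, ‖W j * X j‖ =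
          ‖b j‖ * Real.exp (∑ i, (α j i : ℝ) * w i) := fun j => by
        rw [norm_mul, habsW, habsX]
      simp only [prod_exp] at hk
      rw [heq k] at hineq
      rw [Finset.sum_congr rfl fun j _ => heq j] at hineq
      linarith
  refine ⟨key, ?_⟩
  ext p
  constructor
  · rintro ⟨w, hw, rfl⟩
    exact ⟨⟨(key w).mp hw, rfl⟩, Set.mem_prod.2 ⟨Set.mem_univ _, ⟨w, fun j => rfl⟩⟩⟩
  · rintro ⟨⟨hA, hB⟩, hC⟩
    obtain ⟨w, hw⟩ := (Set.mem_prod.1 hC).2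
    have hpe : toricEmbed b α w = p := by
      refine Prod.ext ?_ ?_
      · exact hB.symm
      · exact funext fun j => (hw j).symm
    exact ⟨w, (key w).mpr (hpe ▸ hA), hpe⟩
end

section
/- Let f be a nonzero Laurent polynomial in n complex variables, let r be a positive integer, and write cres(f;r) = Σ_{β ∈ A(r)} b_{r,β} z^β with all b_{r,β} ≠ 0. Then the unlog amoeba U(f) = { (|z_1|,…,|z_n|) : z ∈ (ℂ∖{0})^n, f(z) = 0 } ⊆ (ℝ_{>0})^n is contained in the semi-algebraic set defined by the inequalities Σ_{β ∈ A(r)∖{β₀}} |b_{r,β}| x^β ≥ |b_{r,β₀}| x^{β₀} for every β₀ ∈ A(r), together with x_1,…,x_n > 0. That is, every point x = |v| with v a zero of f on the torus satisfies all the non-lopsidedness inequalities of cres(f;r). -/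
open Finset

/-- The unlog amoeba `U(f)` is contained in the semi-algebraic set defined by
the non-lopsidedness inequalities of `cres(f;r)`: for every zero `z` of `f` on
the torus, the point `x = |z|` has positive coordinates and satisfies
`|b_{r,β₀}| x^{β₀} ≤ ∑_{β ≠ β₀} |b_{r,β}| x^β` for every exponent `β₀` in the
support of `cres(f;r)`. -/
theorem unlog_amoeba_subset_semialgebraic
    (n d : ℕ) (hd : 0 < d) (b : Fin d → ℂ) (hb : ∀ j, b j ≠ 0)
    (α : Fin d → Fin n → ℤ) (hα : Function.Injective α) (r : ℕ) (hr : 0 < r)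
    (e : ℕ) (c : Fin e → ℂ) (β : Fin e → Fin n → ℤ)
    (hc : ∀ j, c j ≠ 0) (hβ : Function.Injective β)
    (hrep : ∀ z : Fin n → ℂ, (∀ i, z i ≠ 0) → cresEval b α r z = lauEval c β z) :
    {x : Fin n → ℝ | ∃ z : Fin n → ℂ, (∀ i, z i ≠ 0) ∧ lauEval b α z = 0 ∧
        ∀ i, x i = ‖z i‖} ⊆
      {x : Fin n → ℝ | (∀ i, 0 < x i) ∧ ∀ k : Fin e,
        ‖c k‖ * ∏ i, x i ^ β k i ≤
          ∑ j ∈ Finset.univ.erase k, ‖c j‖ * ∏ i, x i ^ β j i} := by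
  intro x hx
  obtain ⟨z, hz, hfz, hxz⟩ := hx
  have hcres : cresEval b α r z = 0 := by
    apply Finset.prod_eq_zero (Finset.mem_univ (fun _ => (⟨0, hr⟩ : Fin r)))
    have hzz : (fun i => Complex.exp (2 * Real.pi * Complex.I *
        (((fun _ => (⟨0, hr⟩ : Fin r)) i : Fin r) : ℕ) / r) * z i) = z := by
      funext i
      simp
    rw [hzz]; exact hfz
  have hc0 : lauEval c β z = 0 := by rw [← hrep z hz]; exact hcres
  have habs : ∀ j : Fin e, ‖c j * ∏ i, z i ^ β j i‖
      = ‖c j‖ * ∏ i, x i ^ β j i := by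
    intro j
    rw [norm_mul, norm_prod]
    congr 1
    refine Finset.prod_congr rfl fun i _ => ?_
    rw [hxz i, norm_zpow]
  constructor
  · intro i; rw [hxz i]; exact norm_pos_iff.mpr (hz i)
  · intro k
    have hsum : c k * ∏ i, z i ^ β k i
        = -∑ j ∈ Finset.univ.erase k, c j * ∏ i, z i ^ β j i := by
      have h := hc0
      unfold lauEval at h
      rw [← Finset.add_sum_erase _ _ (Finset.mem_univ k)] at h
      linear_combination h
    calc ‖c k‖ * ∏ i, x i ^ β k i
        = ‖c k * ∏ i, z i ^ β k i‖ := (habs k).symm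
      _ = ‖∑ j ∈ Finset.univ.erase k, c j * ∏ i, z i ^ β j i‖ := by
          rw [hsum, norm_neg]
      _ ≤ ∑ j ∈ Finset.univ.erase k, ‖c j * ∏ i, z i ^ β j i‖ :=
          norm_sum_le _ _
      _ = ∑ j ∈ Finset.univ.erase k, ‖c j‖ * ∏ i, x i ^ β j i :=
          Finset.sum_congr rfl fun j _ => habs j
end
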